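/- Let G act continuously and cocompactly on a nonempty topological space X (i.e. there is a compact set K ⊆ X with ⋃_{g∈G} g·K = X), let χ : G → ℝ be a homomorphism, and let h : X → ℝ be a continuous control function for χ, i.e. h(g·x) = h(x) + χ(g) for all g ∈ G, x ∈ X. Then χ is nonzero if and only if there exists λ ≥ 0 such that for every s ∈ ℝ there is a point x ∈ X with |h(x) − s| ≤ λ (equivalently, every set X_{s,λ}(h) is nonempty). This is the characterization of χ being controlled (−1)-connected (CC⁻¹). -/

import Mathlib

open scoped Pointwise

/-- Let `G` act continuously and cocompactly on a nonempty
topological space `X`, let `χ : G → ℝ` be a homomorphism and let `h : X → ℝ` be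
a continuous control function for `χ`.  Then `χ` is nonzero if and only if
there exists `λ ≥ 0` such that for every `s ∈ ℝ` there is `x ∈ X` with
`|h(x) − s| ≤ λ` (i.e. every `X_{s,λ}(h)` is nonempty).  This characterizes
`χ` being controlled `(−1)`-connected (`CC⁻¹`). -/
theorem statement15 {G X : Type*} [Group G] [TopologicalSpace X] [MulAction G X]
    [Nonempty X]
    (hcont : ∀ g : G, Continuous fun x : X => g • x)
    (hcocpt : ∃ K : Set X, IsCompact K ∧ ⋃ g : G, g • K = Set.univ)
    (χ : G → ℝ) (hχ : ∀ a b : G, χ (a * b) = χ a + χ b)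
    (h : X → ℝ) (hc : Continuous h)
    (he : ∀ (g : G) (x : X), h (g • x) = h x + χ g) :
    (∃ g : G, χ g ≠ 0) ↔ ∃ l : ℝ, 0 ≤ l ∧ ∀ s : ℝ, ∃ x : X, |h x - s| ≤ l := by
  constructor
  · rintro ⟨g, hg⟩
    obtain ⟨x₀⟩ := ‹Nonempty X›
    set c := χ g with hc'
    -- χ as a monoid hom into Multiplicative ℝ
    let φ : G →* Multiplicative ℝ :=
      MonoidHom.mk' (fun a => Multiplicative.ofAdd (χ a)) (fun a b => by
        simp [hχ, ofAdd_add])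
    have hzpow : ∀ n : ℤ, χ (g ^ n) = n * c := by
      intro n
      have := map_zpow φ g n
      have h2 : χ (g ^ n) = n • χ g := by
        have h3 := congrArg Multiplicative.toAdd this
        simpa [φ, toAdd_zpow] using h3
      simpa [zsmul_eq_mul] using h2
    refine ⟨|c|, abs_nonneg _, fun s => ?_⟩
    set t : ℝ := (s - h x₀) / c with ht
    set n : ℤ := round t with hn
    refine ⟨g ^ n • x₀, ?_⟩
    have hhx : h (g ^ n • x₀) = h x₀ + n * c := by rw [he, hzpow]
    have hr : |(n : ℝ) - t| ≤ 1 / 2 := by simpa [abs_sub_comm] using abs_sub_round t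
    have hct : c * t = s - h x₀ := by
      rw [ht]; field_simp
    have : h (g ^ n • x₀) - s = c * ((n : ℝ) - t) := by
      rw [hhx]; rw [mul_sub, hct]; ring
    rw [this, abs_mul]
    have habs : |c| * |(n : ℝ) - t| ≤ |c| * (1 / 2) :=
      mul_le_mul_of_nonneg_left hr (abs_nonneg c)
    nlinarith [abs_nonneg c]
  · rintro ⟨l, hl, hall⟩
    by_contra hno
    push_neg at hno
    obtain ⟨K, hK, hKcov⟩ := hcocpt
    have hinv : ∀ (g : G) (x : X), h (g • x) = h x := by
      intro g x; rw [he, hno g, add_zero]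
    have himg : IsCompact (h '' K) := hK.image hc
    obtain ⟨M, hM⟩ := himg.bddAbove
    obtain ⟨x, hx⟩ := hall (M + l + 1)
    have hxmem : x ∈ ⋃ g : G, g • K := hKcov ▸ Set.mem_univ x
    obtain ⟨g, hgmem⟩ := Set.mem_iUnion.mp hxmem
    obtain ⟨k, hk, rfl⟩ := hgmem
    have h1 : h (g • k) = h k := hinv g k
    have h2 : h k ≤ M := hM ⟨k, hk, rfl⟩
    have := abs_le.mp hx
    linarith [this.1, this.2, h1 ▸ h2]
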